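/- arXiv:1706.02040 — 3 statements merged into one kernel-verified Lean document; each statement's English description precedes it below -/
import Mathlib

section
/- If a Markov kernel P on a Polish space satisfies the Doeblin condition ‖P(x,·) − P(y,·)‖_TV ≤ 1−a for all x,y and some a ∈ (0,1), then for any two initial probability measures ν₁, ν₂ one has ‖ν₁Pⁿ − ν₂Pⁿ‖_TV ≤ (1−a)ⁿ‖ν₁ − ν₂‖_TV for all n ≥ 0. -/
open MeasureTheory ProbabilityTheory Filter
open scoped ENNReal

/-- Total variation distance between two measures. -/
noncomputable def tvDist {X : Type*} [MeasurableSpace X] (μ ν : Measure X) : ℝ :=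
  ⨆ s : {s : Set X // MeasurableSet s}, |(μ s.1).toReal - (ν s.1).toReal|

/-- One step of a Markov kernel acting on a measure. -/
noncomputable def stepK {X : Type*} [MeasurableSpace X] (κ : Kernel X X) (ν : Measure X) :
    Measure X :=
  ν.bind (fun x => κ x)

section Aux

variable {X : Type*} [MeasurableSpace X]

lemma tvDist_bddAbove (μ ν : Measure X) [IsFiniteMeasure μ] [IsFiniteMeasure ν] :
    BddAbove (Set.range fun s : {s : Set X // MeasurableSet s} =>
      |(μ s.1).toReal - (ν s.1).toReal|) := by
  refine ⟨(μ Set.univ).toReal + (ν Set.univ).toReal, ?_⟩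
  rintro x ⟨s, rfl⟩
  refine (abs_sub _ _).trans ?_
  rw [abs_of_nonneg ENNReal.toReal_nonneg, abs_of_nonneg ENNReal.toReal_nonneg]
  exact add_le_add
    (ENNReal.toReal_mono (measure_ne_top μ _) (measure_mono (Set.subset_univ _)))
    (ENNReal.toReal_mono (measure_ne_top ν _) (measure_mono (Set.subset_univ _)))

lemma abs_le_tvDist (μ ν : Measure X) [IsFiniteMeasure μ] [IsFiniteMeasure ν]
    {s : Set X} (hs : MeasurableSet s) :
    |(μ s).toReal - (ν s).toReal| ≤ tvDist μ ν :=
  le_ciSup (tvDist_bddAbove μ ν) (⟨s, hs⟩ : {s : Set X // MeasurableSet s})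

lemma tvDist_nonneg (μ ν : Measure X) [IsFiniteMeasure μ] [IsFiniteMeasure ν] :
    0 ≤ tvDist μ ν := by
  have := abs_le_tvDist μ ν MeasurableSet.empty
  simpa using this.trans' (abs_nonneg _)

lemma tvDist_comm (μ ν : Measure X) : tvDist μ ν = tvDist ν μ := by
  unfold tvDist
  congr 1; funext s; exact abs_sub_comm _ _

lemma isProbabilityMeasure_stepK (κ : Kernel X X) [IsMarkovKernel κ]
    (ν : Measure X) [IsProbabilityMeasure ν] : IsProbabilityMeasure (stepK κ ν) := by
  constructor
  rw [stepK, Measure.bind_apply MeasurableSet.univ κ.measurable.aemeasurable]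
  simp

lemma stepK_apply (κ : Kernel X X) [IsMarkovKernel κ] (ν : Measure X)
    {s : Set X} (hs : MeasurableSet s) : stepK κ ν s = ∫⁻ x, κ x s ∂ν :=
  Measure.bind_apply hs κ.measurable.aemeasurable

/-- The key one-sided one-step estimate. -/
lemma stepK_le (κ : Kernel X X) [IsMarkovKernel κ] {a : ℝ} (ha0 : 0 ≤ 1 - a)
    (hDo : ∀ x y : X, tvDist (κ x) (κ y) ≤ 1 - a)
    (μ ν : Measure X) [IsProbabilityMeasure μ] [IsProbabilityMeasure ν]
    {s : Set X} (hs : MeasurableSet s) :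
    stepK κ μ s ≤ stepK κ ν s + ENNReal.ofReal ((1 - a) * tvDist μ ν) := by
  obtain ⟨D, hDm, h1, h2⟩ := hahn_decomposition (μ := μ) (ν := ν)
  -- basic inequalities
  have hle1 : ν.restrict D ≤ μ.restrict D := by
    refine Measure.le_iff.2 fun t ht => ?_
    rw [Measure.restrict_apply ht, Measure.restrict_apply ht]
    exact h1 _ (ht.inter hDm) Set.inter_subset_right
  have hle2 : μ.restrict Dᶜ ≤ ν.restrict Dᶜ := by
    refine Measure.le_iff.2 fun t ht => ?_
    rw [Measure.restrict_apply ht, Measure.restrict_apply ht]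
    exact h2 _ (ht.inter hDm.compl) Set.inter_subset_right
  set α : Measure X := μ.restrict D - ν.restrict D with hα
  set β : Measure X := ν.restrict Dᶜ - μ.restrict Dᶜ with hβ
  have hαadd : α + ν.restrict D = μ.restrict D := Measure.sub_add_cancel_of_le hle1
  have hβadd : β + μ.restrict Dᶜ = ν.restrict Dᶜ := Measure.sub_add_cancel_of_le hle2
  set M : ℝ≥0∞ := μ D - ν D with hM
  have hνD : ν D ≤ μ D := h1 D hDm le_rfl
  have hμDc : μ Dᶜ ≤ ν Dᶜ := h2 Dᶜ hDm.compl le_rfl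
  have hαuniv : α Set.univ = M := by
    rw [hα, Measure.sub_apply MeasurableSet.univ hle1]
    simp [hM]
  have hβuniv : β Set.univ = M := by
    rw [hβ, Measure.sub_apply MeasurableSet.univ hle2]
    simp only [Measure.restrict_apply_univ]
    have h1' : μ D + μ Dᶜ = 1 := by
      rw [measure_add_measure_compl hDm, measure_univ]
    have h2' : ν D + ν Dᶜ = 1 := by
      rw [measure_add_measure_compl hDm, measure_univ]
    have key : μ D = (ν Dᶜ - μ Dᶜ) + ν D := by
      have : μ D + μ Dᶜ = ((ν Dᶜ - μ Dᶜ) + ν D) + μ Dᶜ := by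
        rw [h1']
        rw [add_right_comm, tsub_add_cancel_of_le hμDc, add_comm, h2']
      exact WithTop.add_right_cancel (measure_ne_top μ Dᶜ) this
    rw [hM, eq_comm, ENNReal.sub_eq_of_eq_add (measure_ne_top ν D) key]
  -- nonemptiness
  have hX : Nonempty X := by
    by_contra h
    rw [not_nonempty_iff] at h
    have := measure_univ (μ := μ)
    simp [Measure.eq_zero_of_isEmpty μ] at this
  -- the pointwise kernel bound
  set c : ℝ≥0∞ := ENNReal.ofReal (1 - a) with hc
  have hker : ∀ x y : X, κ x s ≤ κ y s + c := by
    intro x y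
    have h := (abs_le_tvDist (κ x) (κ y) hs).trans (hDo x y)
    have h' : ((κ x) s).toReal ≤ ((κ y) s).toReal + (1 - a) := by
      have := (le_abs_self (((κ x) s).toReal - ((κ y) s).toReal)).trans h
      linarith
    calc (κ x) s = ENNReal.ofReal (((κ x) s).toReal) := by
          rw [ENNReal.ofReal_toReal (measure_ne_top _ _)]
      _ ≤ ENNReal.ofReal (((κ y) s).toReal + (1 - a)) := ENNReal.ofReal_le_ofReal h'
      _ = ENNReal.ofReal (((κ y) s).toReal) + c := by
          rw [ENNReal.ofReal_add ENNReal.toReal_nonneg ha0]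
      _ = (κ y) s + c := by rw [ENNReal.ofReal_toReal (measure_ne_top _ _)]
  -- the infimum
  set I : ℝ≥0∞ := ⨅ y, κ y s with hI
  have hfI : ∀ x, κ x s ≤ I + c := by
    intro x
    have : κ x s ≤ ⨅ y, (κ y s + c) := le_iInf fun y => hker x y
    rwa [← ENNReal.iInf_add] at this
  have hIf : ∀ y, I ≤ κ y s := fun y => iInf_le _ y
  -- integral bounds
  have hαint : ∫⁻ x, κ x s ∂α ≤ (I + c) * M := by
    calc ∫⁻ x, κ x s ∂α ≤ ∫⁻ _, (I + c) ∂α := lintegral_mono hfI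
      _ = (I + c) * M := by rw [lintegral_const, hαuniv]
  have hβint : I * M ≤ ∫⁻ x, κ x s ∂β := by
    calc I * M = ∫⁻ _, I ∂β := by rw [lintegral_const, hβuniv]
      _ ≤ ∫⁻ x, κ x s ∂β := lintegral_mono hIf
  -- decompose the two integrals
  have hμdec : ∫⁻ x, κ x s ∂μ
      = ∫⁻ x, κ x s ∂α + ∫⁻ x, κ x s ∂(ν.restrict D) + ∫⁻ x, κ x s ∂(μ.restrict Dᶜ) := by
    conv_lhs => rw [← Measure.restrict_add_restrict_compl (μ := μ) hDm, ← hαadd]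
    rw [lintegral_add_measure, lintegral_add_measure]
  have hνdec : ∫⁻ x, κ x s ∂ν
      = ∫⁻ x, κ x s ∂β + ∫⁻ x, κ x s ∂(μ.restrict Dᶜ) + ∫⁻ x, κ x s ∂(ν.restrict D) := by
    conv_lhs => rw [← Measure.restrict_add_restrict_compl (μ := ν) hDm, ← hβadd]
    rw [lintegral_add_measure, lintegral_add_measure]
    ring
  -- conclude
  have hMfin : M ≠ ∞ := by
    refine ne_top_of_le_ne_top (measure_ne_top μ D) ?_
    exact tsub_le_self
  have hαβ : ∫⁻ x, κ x s ∂α ≤ ∫⁻ x, κ x s ∂β + c * M := by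
    calc ∫⁻ x, κ x s ∂α ≤ (I + c) * M := hαint
      _ = I * M + c * M := by rw [add_mul]
      _ ≤ ∫⁻ x, κ x s ∂β + c * M := by gcongr
  have hMtv : M ≤ ENNReal.ofReal (tvDist μ ν) := by
    have hMr : M.toReal = (μ D).toReal - (ν D).toReal :=
      ENNReal.toReal_sub_of_le hνD (measure_ne_top μ D)
    have : M.toReal ≤ tvDist μ ν := by
      rw [hMr]
      exact (le_abs_self _).trans (abs_le_tvDist μ ν hDm)
    calc M = ENNReal.ofReal M.toReal := by rw [ENNReal.ofReal_toReal hMfin]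
      _ ≤ ENNReal.ofReal (tvDist μ ν) := ENNReal.ofReal_le_ofReal this
  calc stepK κ μ s = ∫⁻ x, κ x s ∂μ := stepK_apply κ μ hs
    _ = ∫⁻ x, κ x s ∂α + ∫⁻ x, κ x s ∂(ν.restrict D) + ∫⁻ x, κ x s ∂(μ.restrict Dᶜ) := hμdec
    _ ≤ (∫⁻ x, κ x s ∂β + c * M) + ∫⁻ x, κ x s ∂(ν.restrict D) + ∫⁻ x, κ x s ∂(μ.restrict Dᶜ) := by
        gcongr
    _ = (∫⁻ x, κ x s ∂β + ∫⁻ x, κ x s ∂(μ.restrict Dᶜ) + ∫⁻ x, κ x s ∂(ν.restrict D)) + c * M := by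
        ring
    _ = ∫⁻ x, κ x s ∂ν + c * M := by rw [← hνdec]
    _ ≤ ∫⁻ x, κ x s ∂ν + ENNReal.ofReal ((1 - a) * tvDist μ ν) := by
        gcongr
        calc c * M ≤ c * ENNReal.ofReal (tvDist μ ν) := by gcongr
          _ = ENNReal.ofReal ((1 - a) * tvDist μ ν) := by
              rw [hc, ← ENNReal.ofReal_mul ha0]
    _ = stepK κ ν s + ENNReal.ofReal ((1 - a) * tvDist μ ν) := by rw [stepK_apply κ ν hs]

/-- One-step contraction of `tvDist`. -/
lemma tvDist_stepK_le (κ : Kernel X X) [IsMarkovKernel κ] {a : ℝ} (ha0 : 0 ≤ 1 - a)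
    (hDo : ∀ x y : X, tvDist (κ x) (κ y) ≤ 1 - a)
    (μ ν : Measure X) [IsProbabilityMeasure μ] [IsProbabilityMeasure ν] :
    tvDist (stepK κ μ) (stepK κ ν) ≤ (1 - a) * tvDist μ ν := by
  have hP1 := isProbabilityMeasure_stepK κ μ
  have hP2 := isProbabilityMeasure_stepK κ ν
  have htv0 : 0 ≤ tvDist μ ν := tvDist_nonneg μ ν
  have hr0 : 0 ≤ (1 - a) * tvDist μ ν := mul_nonneg ha0 htv0
  refine ciSup_le fun t => ?_
  obtain ⟨s, hs⟩ := t
  rw [abs_sub_le_iff]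
  constructor
  · have h := stepK_le κ ha0 hDo μ ν hs
    have := ENNReal.toReal_mono (by
      exact ENNReal.add_ne_top.2 ⟨measure_ne_top _ _, ENNReal.ofReal_ne_top⟩) h
    rw [ENNReal.toReal_add (measure_ne_top _ _) ENNReal.ofReal_ne_top,
      ENNReal.toReal_ofReal hr0] at this
    linarith
  · have h := stepK_le κ ha0 hDo ν μ hs
    rw [tvDist_comm ν μ] at h
    have := ENNReal.toReal_mono (by
      exact ENNReal.add_ne_top.2 ⟨measure_ne_top _ _, ENNReal.ofReal_ne_top⟩) h
    rw [ENNReal.toReal_add (measure_ne_top _ _) ENNReal.ofReal_ne_top,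
      ENNReal.toReal_ofReal hr0] at this
    linarith

end Aux

theorem doeblin_contraction {X : Type*} [TopologicalSpace X] [PolishSpace X]
    [MeasurableSpace X] [BorelSpace X]
    (κ : Kernel X X) [IsMarkovKernel κ] (a : ℝ) (ha : a ∈ Set.Ioo (0:ℝ) 1)
    (hD : ∀ x y : X, tvDist (κ x) (κ y) ≤ 1 - a)
    (ν₁ ν₂ : Measure X) [IsProbabilityMeasure ν₁] [IsProbabilityMeasure ν₂] (n : ℕ) :
    tvDist ((stepK κ)^[n] ν₁) ((stepK κ)^[n] ν₂) ≤ (1 - a) ^ n * tvDist ν₁ ν₂ := by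
  have ha0 : 0 ≤ 1 - a := by linarith [ha.2]
  induction n generalizing ν₁ ν₂ with
  | zero => simp
  | succ n ih =>
    have hP1 := isProbabilityMeasure_stepK κ ν₁
    have hP2 := isProbabilityMeasure_stepK κ ν₂
    rw [Function.iterate_succ_apply, Function.iterate_succ_apply]
    calc tvDist ((stepK κ)^[n] (stepK κ ν₁)) ((stepK κ)^[n] (stepK κ ν₂))
        ≤ (1 - a) ^ n * tvDist (stepK κ ν₁) (stepK κ ν₂) := ih _ _
      _ ≤ (1 - a) ^ n * ((1 - a) * tvDist ν₁ ν₂) := by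
          have := tvDist_stepK_le κ ha0 hD ν₁ ν₂
          exact mul_le_mul_of_nonneg_left this (pow_nonneg ha0 n)
      _ = (1 - a) ^ (n + 1) * tvDist ν₁ ν₂ := by ring
end

section
/- Let g be a measurable function of a trajectory in X^ℕ, measurable with respect to F_τ for a stopping time τ with E[τ] < ∞. If ‖P_ε(x,·) − P(x,·)‖_TV ≤ ε for all x and Law(X₀) = Law(X₀^ε), then ‖Law(g(X)) − Law(g(X^ε))‖_TV ≤ ε·E[τ], where X and X^ε are the chains with kernels P and P_ε respectively. -/
open MeasureTheory ProbabilityTheory Filter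
open scoped ENNReal

open Topology

lemma abs_sub_le_tvDist {X : Type*} [MeasurableSpace X] (μ ν : Measure X)
    [IsProbabilityMeasure μ] [IsProbabilityMeasure ν] {s : Set X} (hs : MeasurableSet s) :
    |(μ s).toReal - (ν s).toReal| ≤ tvDist μ ν := by
  have hb : BddAbove (Set.range fun s : {s : Set X // MeasurableSet s} =>
      |(μ s.1).toReal - (ν s.1).toReal|) := by
    refine ⟨2, ?_⟩
    rintro x ⟨t, rfl⟩
    have h1 : (μ t.1).toReal ≤ 1 := by
      have := prob_le_one (μ := μ) (s := t.1)
      simpa using ENNReal.toReal_le_of_le_ofReal zero_le_one (by simpa using this)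
    have h2 : (ν t.1).toReal ≤ 1 := by
      have := prob_le_one (μ := ν) (s := t.1)
      simpa using ENNReal.toReal_le_of_le_ofReal zero_le_one (by simpa using this)
    have h1' : 0 ≤ (μ t.1).toReal := ENNReal.toReal_nonneg
    have h2' : 0 ≤ (ν t.1).toReal := ENNReal.toReal_nonneg
    rw [abs_sub_le_iff]
    constructor <;> linarith
  exact le_ciSup hb ⟨s, hs⟩

lemma tvDist_integral_le {X : Type*} [MeasurableSpace X] (μ ν : Measure X)
    [IsProbabilityMeasure μ] [IsProbabilityMeasure ν] {h : X → ℝ} (hm : Measurable h)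
    (h0 : ∀ a, 0 ≤ h a) (h1 : ∀ a, h a ≤ 1) :
    |∫ a, h a ∂μ - ∫ a, h a ∂ν| ≤ tvDist μ ν := by
  have hint : ∀ (ρ : Measure X) [IsProbabilityMeasure ρ], Integrable h ρ := by
    intro ρ _
    refine (integrable_const (1:ℝ)).mono' hm.aestronglyMeasurable ?_
    exact ae_of_all _ fun a => by
      rw [Real.norm_eq_abs, abs_of_nonneg (h0 a)]; simpa using h1 a
  have key : ∀ (ρ : Measure X) [IsProbabilityMeasure ρ],
      ∫ a, h a ∂ρ = ∫ t in Set.Ioc (0:ℝ) 1, (ρ {a | t < h a}).toReal := by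
    intro ρ _
    rw [(hint ρ).integral_eq_integral_meas_lt (ae_of_all _ h0)]
    simp only [measureReal_def]
    have hsplit : Set.Ioc (0:ℝ) 1 ∪ Set.Ioi 1 = Set.Ioi 0 := Set.Ioc_union_Ioi_eq_Ioi zero_le_one
    have hdisj : Disjoint (Set.Ioc (0:ℝ) 1) (Set.Ioi 1) := by
      rw [Set.disjoint_left]; rintro t ⟨_, ht1⟩ ht2; exact absurd ht2 (not_lt.2 ht1)
    have hF : Measurable fun t : ℝ => (ρ {a | t < h a}).toReal := by
      apply Antitone.measurable
      intro s t hst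
      have : {a | t < h a} ⊆ {a | s < h a} := fun a ha => lt_of_le_of_lt hst ha
      exact ENNReal.toReal_mono (measure_ne_top _ _) (measure_mono this)
    have hIoc : IntegrableOn (fun t : ℝ => (ρ {a | t < h a}).toReal) (Set.Ioc 0 1) := by
      refine Integrable.mono' (g := fun _ => (1:ℝ)) (integrableOn_const ?_)
        hF.aestronglyMeasurable (ae_of_all _ fun t => ?_)
      · simp [Real.volume_Ioc]
      · rw [Real.norm_eq_abs, abs_of_nonneg ENNReal.toReal_nonneg]
        exact ENNReal.toReal_le_of_le_ofReal zero_le_one (by simpa using prob_le_one)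
    have hIoi : IntegrableOn (fun t : ℝ => (ρ {a | t < h a}).toReal) (Set.Ioi 1) := by
      refine (integrableOn_zero).congr_fun (fun t ht => ?_) measurableSet_Ioi
      have : {a | t < h a} = ∅ := by
        ext a; simp only [Set.mem_setOf_eq, Set.mem_empty_iff_false, iff_false, not_lt]
        exact (h1 a).trans (le_of_lt ht)
      simp [this]
    rw [← hsplit, setIntegral_union hdisj measurableSet_Ioi hIoc hIoi]
    have : ∫ t in Set.Ioi (1:ℝ), (ρ {a | t < h a}).toReal = 0 := by
      refine setIntegral_eq_zero_of_forall_eq_zero fun t ht => ?_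
      have : {a | t < h a} = ∅ := by
        ext a; simp only [Set.mem_setOf_eq, Set.mem_empty_iff_false, iff_false, not_lt]
        exact (h1 a).trans (le_of_lt ht)
      simp [this]
    rw [this, add_zero]
  rw [key μ, key ν]
  have hIoc : ∀ (ρ : Measure X) [IsProbabilityMeasure ρ],
      IntegrableOn (fun t : ℝ => (ρ {a | t < h a}).toReal) (Set.Ioc 0 1) := by
    intro ρ _
    have hF : Measurable fun t : ℝ => (ρ {a | t < h a}).toReal := by
      apply Antitone.measurable
      intro s t hst
      have : {a | t < h a} ⊆ {a | s < h a} := fun a ha => lt_of_le_of_lt hst ha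
      exact ENNReal.toReal_mono (measure_ne_top _ _) (measure_mono this)
    refine Integrable.mono' (g := fun _ => (1:ℝ)) (integrableOn_const ?_)
      hF.aestronglyMeasurable (ae_of_all _ fun t => ?_)
    · simp [Real.volume_Ioc]
    · rw [Real.norm_eq_abs, abs_of_nonneg ENNReal.toReal_nonneg]
      exact ENNReal.toReal_le_of_le_ofReal zero_le_one (by simpa using prob_le_one)
  rw [← integral_sub (hIoc μ) (hIoc ν)]
  have hbound : ‖∫ t in Set.Ioc (0:ℝ) 1,
      ((μ {a | t < h a}).toReal - (ν {a | t < h a}).toReal)‖ ≤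
      tvDist μ ν * (volume (Set.Ioc (0:ℝ) 1)).toReal := by
    refine norm_setIntegral_le_of_norm_le_const (by simp [Real.volume_Ioc]) (fun t _ => ?_)
    · rw [Real.norm_eq_abs]
      exact abs_sub_le_tvDist μ ν (measurableSet_lt measurable_const hm)
  rw [Real.norm_eq_abs] at hbound
  simpa [Real.volume_Ioc] using hbound
lemma integrable_of_bdd01 {α : Type*} [MeasurableSpace α] (ρ : Measure α) [IsFiniteMeasure ρ]
    {h : α → ℝ} (hm : AEStronglyMeasurable h ρ) (h0 : ∀ a, 0 ≤ h a) (h1 : ∀ a, h a ≤ 1) :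
    Integrable h ρ :=
  (integrable_const 1).mono' hm (ae_of_all _ fun a => by
    rw [Real.norm_eq_abs, abs_of_nonneg (h0 a)]; exact h1 a)

lemma integral_bdd01 {α : Type*} [MeasurableSpace α] (ρ : Measure α) [IsProbabilityMeasure ρ]
    {h : α → ℝ} (hm : AEStronglyMeasurable h ρ) (h0 : ∀ a, 0 ≤ h a) (h1 : ∀ a, h a ≤ 1) :
    0 ≤ ∫ a, h a ∂ρ ∧ ∫ a, h a ∂ρ ≤ 1 := by
  refine ⟨integral_nonneg h0, ?_⟩
  calc ∫ a, h a ∂ρ ≤ ∫ _a, (1:ℝ) ∂ρ :=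
        integral_mono (integrable_of_bdd01 ρ hm h0 h1) (integrable_const 1) h1
    _ = 1 := by simp

lemma kint_meas {X : Type*} [MeasurableSpace X] (κ : Kernel X X) [IsMarkovKernel κ]
    {Φ : (ℕ → X) → ℝ} (hΦm : Measurable Φ) (j : ℕ) :
    Measurable fun x : ℕ → X => ∫ y, Φ (Function.update x (j+1) y) ∂(κ (x j)) := by
  have hη : ∀ x : ℕ → X, κ (x j) = (κ.comap (fun w => w j) (measurable_pi_apply j)) x :=
    fun x => (Kernel.comap_apply κ (measurable_pi_apply j) x).symm
  have : (fun x : ℕ → X => ∫ y, Φ (Function.update x (j+1) y) ∂(κ (x j)))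
      = fun x => ∫ y, (fun p : (ℕ → X) × X => Φ (Function.update p.1 (j+1) p.2)) (x, y)
        ∂((κ.comap (fun w => w j) (measurable_pi_apply j)) x) := by
    funext x; rw [hη]
  rw [this]
  exact ((hΦm.comp measurable_update').stronglyMeasurable).integral_kernel_prod_right'.measurable

lemma sum_ite_lt_le (t N : ℕ) :
    (∑ j ∈ Finset.range N, if j < t then (1:ℝ) else 0) ≤ (t:ℝ) := by
  classical
  rw [Finset.sum_boole]
  have hsub : (Finset.range N).filter (fun j => j < t) ⊆ Finset.range t := by
    intro j hj
    simp only [Finset.mem_filter, Finset.mem_range] at hj ⊢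
    exact hj.2
  have := Finset.card_le_card hsub
  rw [Finset.card_range] at this
  exact_mod_cast this

lemma markov_step {X : Type*} [MeasurableSpace X]
    {Ω : Type*} [mΩ : MeasurableSpace Ω] (μ : Measure Ω) [IsProbabilityMeasure μ]
    (κ : Kernel X X) [IsMarkovKernel κ]
    (Xc : ℕ → Ω → X) (hXm : ∀ n, Measurable (Xc n))
    (𝓕 : Filtration ℕ mΩ) (hadapt : ∀ n, Measurable[𝓕 n] (Xc n))
    (hmark : ∀ (n : ℕ) (A : Set X), MeasurableSet A →
      (μ[fun ω => Set.indicator A (fun _ => (1 : ℝ)) (Xc (n + 1) ω) | 𝓕 n]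
        =ᵐ[μ] fun ω => ((κ (Xc n ω)) A).toReal))
    (j : ℕ) (Φ : (ℕ → X) → ℝ) (hΦm : Measurable Φ)
    (hΦ0 : ∀ x, 0 ≤ Φ x) (hΦ1 : ∀ x, Φ x ≤ 1)
    (hΦdep : ∀ x y : ℕ → X, (∀ k ≤ j + 1, x k = y k) → Φ x = Φ y) :
    ∫ ω, Φ (fun n => Xc n ω) ∂μ
      = ∫ ω, ∫ y, Φ (Function.update (fun n => Xc n ω) (j+1) y) ∂(κ (Xc j ω)) ∂μ := by
  classical
  set W : Ω → (ℕ → X) := fun ω n => Xc (min n j) ω with hW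
  have hW𝓕 : Measurable[𝓕 j] W := by
    letI : MeasurableSpace Ω := 𝓕 j
    exact measurable_pi_lambda W fun n =>
      (hadapt (min n j)).mono (𝓕.mono (min_le_right n j)) le_rfl
  have hWm : Measurable W := hW𝓕.mono (𝓕.le j) le_rfl
  set η : Kernel (ℕ → X) X := κ.comap (fun w => w j) (measurable_pi_apply j) with hη
  set Ψ : (ℕ → X) × X → ℝ := fun p => Φ (Function.update p.1 (j+1) p.2) with hΨ
  have hΨm : Measurable Ψ := hΦm.comp measurable_update'
  have hηW : ∀ ω, η (W ω) = κ (Xc j ω) := by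
    intro ω
    rw [hη, Kernel.comap_apply]
    simp [hW]
  set ρ₁ : Measure ((ℕ → X) × X) := Measure.map (fun ω => (W ω, Xc (j+1) ω)) μ with hρ₁
  set ρ₂ : Measure ((ℕ → X) × X) := (Measure.map W μ) ⊗ₘ η with hρ₂
  have hpairm : Measurable (fun ω => (W ω, Xc (j+1) ω)) := hWm.prodMk (hXm (j+1))
  haveI : IsProbabilityMeasure ρ₁ := Measure.isProbabilityMeasure_map hpairm.aemeasurable
  haveI : IsProbabilityMeasure (Measure.map W μ) := Measure.isProbabilityMeasure_map hWm.aemeasurable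
  haveI : IsProbabilityMeasure ρ₂ := by rw [hρ₂]; infer_instance
  -- the two joint laws agree
  have hρ : ρ₁ = ρ₂ := by
    refine ext_of_generate_finite _ generateFrom_prod.symm isPiSystem_prod ?_ ?_
    swap
    · rw [measure_univ, measure_univ]
    rintro _ ⟨S, hS, A, hA, rfl⟩
    simp only [Set.mem_setOf_eq] at hS hA
    have h₁ : ρ₁ (S ×ˢ A) = μ (W ⁻¹' S ∩ Xc (j+1) ⁻¹' A) := by
      rw [hρ₁, Measure.map_apply hpairm (hS.prod hA), Set.mk_preimage_prod]
    have h₂ : ρ₂ (S ×ˢ A) = ∫⁻ ω in W ⁻¹' S, κ (Xc j ω) A ∂μ := by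
      rw [hρ₂, Measure.compProd_apply_prod hS hA,
        setLIntegral_map hS (η.measurable_coe hA) hWm]
      exact lintegral_congr fun ω => by rw [hηW]
    rw [h₁, h₂]
    -- use the Markov property through conditional expectation
    have hindint : Integrable (fun ω => Set.indicator A (fun _ => (1:ℝ)) (Xc (j+1) ω)) μ := by
      refine Integrable.mono' (integrable_const (1:ℝ)) ?_ (ae_of_all _ fun ω => ?_)
      · exact ((measurable_const.indicator hA).comp (hXm (j+1))).aestronglyMeasurable
      · rw [Real.norm_eq_abs]
        rcases Set.indicator_eq_zero_or_self A (fun _ => (1:ℝ)) (Xc (j+1) ω) with h | h <;>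
          simp [h]
    have hcond := setIntegral_condExp (𝓕.le j) hindint (hW𝓕 hS)
    have hcong : ∫ ω in W ⁻¹' S, (μ[fun ω => Set.indicator A (fun _ => (1 : ℝ))
        (Xc (j + 1) ω) | 𝓕 j]) ω ∂μ = ∫ ω in W ⁻¹' S, ((κ (Xc j ω)) A).toReal ∂μ :=
      setIntegral_congr_ae ((𝓕.le j) _ (hW𝓕 hS)) ((hmark j A hA).mono fun ω h _ => h)
    have hL : ∫ ω in W ⁻¹' S, Set.indicator A (fun _ => (1:ℝ)) (Xc (j+1) ω) ∂μ
        = (μ (W ⁻¹' S ∩ Xc (j+1) ⁻¹' A)).toReal := by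
      have : (fun ω => Set.indicator A (fun _ => (1:ℝ)) (Xc (j+1) ω))
          = Set.indicator (Xc (j+1) ⁻¹' A) (fun _ => (1:ℝ)) := by
        funext ω; simp [Set.indicator_apply]
      rw [this, integral_indicator_const (1:ℝ) ((hXm (j+1)) hA), measureReal_def, Measure.restrict_apply
        ((hXm (j+1)) hA), smul_eq_mul, mul_one, Set.inter_comm]
    have hR : ∫ ω in W ⁻¹' S, ((κ (Xc j ω)) A).toReal ∂μ
        = (∫⁻ ω in W ⁻¹' S, κ (Xc j ω) A ∂μ).toReal := by
      rw [integral_toReal]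
      · exact ((κ.measurable_coe hA).comp (hXm j)).aemeasurable
      · exact ae_of_all _ fun ω => measure_lt_top _ _
    have hfin₁ : μ (W ⁻¹' S ∩ Xc (j+1) ⁻¹' A) ≠ ∞ := measure_ne_top _ _
    have hfin₂ : ∫⁻ ω in W ⁻¹' S, κ (Xc j ω) A ∂μ ≠ ∞ := by
      have hle : ∫⁻ ω in W ⁻¹' S, κ (Xc j ω) A ∂μ ≤ ∫⁻ _ω in W ⁻¹' S, 1 ∂μ :=
        lintegral_mono fun ω => prob_le_one
      rw [setLIntegral_one] at hle
      exact ne_of_lt (lt_of_le_of_lt hle (measure_lt_top μ _))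
    rw [← ENNReal.toReal_eq_toReal_iff' hfin₁ hfin₂, ← hL, hcond.symm.trans hcong, hR]
  -- now transfer the integral identity
  have hΨ01 : ∀ p, 0 ≤ Ψ p ∧ Ψ p ≤ 1 := fun p => ⟨hΦ0 _, hΦ1 _⟩
  have step1 : ∫ ω, Φ (fun n => Xc n ω) ∂μ = ∫ ω, Ψ (W ω, Xc (j+1) ω) ∂μ := by
    refine integral_congr_ae (ae_of_all _ fun ω => ?_)
    refine hΦdep _ _ fun k hk => ?_
    rcases Nat.lt_or_ge k (j+1) with h | h
    · have hkj : k ≤ j := Nat.lt_succ_iff.mp h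
      simp [hΨ, Function.update_apply, Nat.ne_of_lt h, hW, min_eq_left hkj]
    · have : k = j + 1 := le_antisymm hk h
      subst this
      simp [hΨ]
  have step2 : ∫ ω, Ψ (W ω, Xc (j+1) ω) ∂μ = ∫ p, Ψ p ∂ρ₁ :=
    (integral_map hpairm.aemeasurable hΨm.aestronglyMeasurable).symm
  have hΨint : Integrable Ψ ρ₂ := by
    refine Integrable.mono' (integrable_const (1:ℝ)) hΨm.aestronglyMeasurable
      (ae_of_all _ fun p => ?_)
    rw [Real.norm_eq_abs, abs_of_nonneg (hΨ01 p).1]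
    exact (hΨ01 p).2
  have step3 : ∫ p, Ψ p ∂ρ₂ = ∫ w, ∫ y, Ψ (w, y) ∂η w ∂(Measure.map W μ) := by
    rw [hρ₂, Measure.integral_compProd hΨint]
  have step4 : ∫ w, ∫ y, Ψ (w, y) ∂η w ∂(Measure.map W μ)
      = ∫ ω, ∫ y, Ψ (W ω, y) ∂η (W ω) ∂μ := by
    refine integral_map hWm.aemeasurable ?_
    exact (hΨm.stronglyMeasurable.integral_kernel_prod_right').aestronglyMeasurable
  have step5 : ∫ ω, ∫ y, Ψ (W ω, y) ∂η (W ω) ∂μ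
      = ∫ ω, ∫ y, Φ (Function.update (fun n => Xc n ω) (j+1) y) ∂(κ (Xc j ω)) ∂μ := by
    refine integral_congr_ae (ae_of_all _ fun ω => ?_)
    dsimp only
    rw [hηW]
    refine integral_congr_ae (ae_of_all _ fun y => ?_)
    refine hΦdep _ _ fun k hk => ?_
    rcases Nat.lt_or_ge k (j+1) with h | h
    · have hkj : k ≤ j := Nat.lt_succ_iff.mp h
      simp [hΨ, Function.update_apply, Nat.ne_of_lt h, hW, min_eq_left hkj]
    · have : k = j + 1 := le_antisymm hk h
      subst this
      simp [hΨ]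
  rw [step1, step2, hρ, step3, step4, step5]

noncomputable def val {X : Type*} [MeasurableSpace X] (κ : Kernel X X) (f0 : (ℕ → X) → ℝ) :
    ℕ → ℕ → (ℕ → X) → ℝ
  | 0, _, x => f0 x
  | (r+1), j, x => ∫ y, val κ f0 r (j+1) (Function.update x (j+1) y) ∂(κ (x j))

lemma val_meas {X : Type*} [MeasurableSpace X] (κ : Kernel X X) [IsMarkovKernel κ]
    {f0 : (ℕ → X) → ℝ} (hf : Measurable f0) : ∀ r j, Measurable (val κ f0 r j) := by
  intro r
  induction r with
  | zero => intro j; exact hf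
  | succ r ih =>
    intro j
    have hη : ∀ x : ℕ → X, κ (x j) = (κ.comap (fun w => w j) (measurable_pi_apply j)) x :=
      fun x => (Kernel.comap_apply κ (measurable_pi_apply j) x).symm
    have : (val κ f0 (r+1) j)
        = fun x => ∫ y, (fun p : (ℕ → X) × X => val κ f0 r (j+1)
            (Function.update p.1 (j+1) p.2)) (x, y)
          ∂((κ.comap (fun w => w j) (measurable_pi_apply j)) x) := by
      funext x
      rw [val, hη]
    rw [this]
    have hFm : StronglyMeasurable (fun p : (ℕ → X) × X =>
        val κ f0 r (j+1) (Function.update p.1 (j+1) p.2)) :=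
      ((ih (j+1)).comp measurable_update').stronglyMeasurable
    exact hFm.integral_kernel_prod_right'.measurable

lemma val_nonneg {X : Type*} [MeasurableSpace X] (κ : Kernel X X) [IsMarkovKernel κ]
    {f0 : (ℕ → X) → ℝ} (h0 : ∀ x, 0 ≤ f0 x) : ∀ r j x, 0 ≤ val κ f0 r j x := by
  intro r
  induction r with
  | zero => intro j x; exact h0 x
  | succ r ih =>
    intro j x
    rw [val]
    exact integral_nonneg fun y => ih (j+1) _

lemma val_le_one {X : Type*} [MeasurableSpace X] (κ : Kernel X X) [IsMarkovKernel κ]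
    {f0 : (ℕ → X) → ℝ} (hf : Measurable f0) (h0 : ∀ x, 0 ≤ f0 x) (h1 : ∀ x, f0 x ≤ 1) :
    ∀ r j x, val κ f0 r j x ≤ 1 := by
  intro r
  induction r with
  | zero => intro j x; exact h1 x
  | succ r ih =>
    intro j x
    rw [val]
    have hint : Integrable (fun y => val κ f0 r (j+1) (Function.update x (j+1) y))
        (κ (x j)) := by
      refine Integrable.mono' (integrable_const (1:ℝ))
        (((val_meas κ hf r (j+1)).comp (measurable_update x)).aestronglyMeasurable)
        (ae_of_all _ fun y => ?_)
      rw [Real.norm_eq_abs, abs_of_nonneg (val_nonneg κ h0 r (j+1) _)]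
      exact ih (j+1) _
    calc ∫ y, val κ f0 r (j+1) (Function.update x (j+1) y) ∂(κ (x j))
        ≤ ∫ _y, (1:ℝ) ∂(κ (x j)) := integral_mono hint (integrable_const 1) fun y => ih (j+1) _
      _ = 1 := by simp

lemma val_dep {X : Type*} [MeasurableSpace X] (κ : Kernel X X) {f0 : (ℕ → X) → ℝ} :
    ∀ r j, (∀ x y, (∀ k ≤ j + r, x k = y k) → f0 x = f0 y) →
      ∀ x y : ℕ → X, (∀ k ≤ j, x k = y k) → val κ f0 r j x = val κ f0 r j y := by
  intro r
  induction r with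
  | zero => intro j hdep x y hxy; exact hdep x y (fun k hk => hxy k (by omega))
  | succ r ih =>
    intro j hdep x y hxy
    rw [val, val, hxy j le_rfl]
    refine integral_congr_ae (ae_of_all _ fun z => ?_)
    refine ih (j+1) (fun a b hab => hdep a b fun k hk => hab k (by omega)) _ _ fun k hk => ?_
    rcases Nat.lt_or_ge k (j+1) with h | h
    · rw [Function.update_apply, Function.update_apply, if_neg (Nat.ne_of_lt h),
        if_neg (Nat.ne_of_lt h)]
      exact hxy k (Nat.lt_succ_iff.mp h)
    · have : k = j + 1 := le_antisymm hk h
      subst this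
      simp

lemma val_const {X : Type*} [MeasurableSpace X] (κ : Kernel X X) [IsMarkovKernel κ]
    {f0 : (ℕ → X) → ℝ} {j₀ : ℕ} {c : ℝ} (x : ℕ → X)
    (hf : ∀ z, (∀ k ≤ j₀, z k = x k) → f0 z = c) :
    ∀ r j, j₀ ≤ j → ∀ z, (∀ k ≤ j₀, z k = x k) → val κ f0 r j z = c := by
  intro r
  induction r with
  | zero => intro j _ z hz; exact hf z hz
  | succ r ih =>
    intro j hj z hz
    rw [val]
    have : ∀ y, val κ f0 r (j+1) (Function.update z (j+1) y) = c := by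
      intro y
      refine ih (j+1) (by omega) _ fun k hk => ?_
      rw [Function.update_apply, if_neg (by omega : k ≠ j + 1)]
      exact hz k hk
    simp only [this]
    simp

theorem path_functional_tv_bound {X : Type*} [TopologicalSpace X] [PolishSpace X]
    [MeasurableSpace X] [BorelSpace X]
    (κ κε : Kernel X X) [IsMarkovKernel κ] [IsMarkovKernel κε]
    (ε : ℝ) (hε : 0 < ε) (happrox : ∀ x : X, tvDist (κε x) (κ x) ≤ ε)
    {Ω : Type*} [mΩ : MeasurableSpace Ω] (μ : Measure Ω) [IsProbabilityMeasure μ]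
    {Ω' : Type*} [mΩ' : MeasurableSpace Ω'] (μ' : Measure Ω') [IsProbabilityMeasure μ']
    (Xc : ℕ → Ω → X) (Xe : ℕ → Ω' → X)
    (𝓕 : Filtration ℕ mΩ) (𝓕' : Filtration ℕ mΩ')
    (hadapt : Adapted 𝓕 Xc) (hadapt' : Adapted 𝓕' Xe)
    -- Markov properties: Xc is a chain with kernel κ, Xe with kernel κε
    (hmark : ∀ (n : ℕ) (A : Set X), MeasurableSet A →
      (μ[fun ω => Set.indicator A (fun _ => (1 : ℝ)) (Xc (n + 1) ω) | 𝓕 n]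
        =ᵐ[μ] fun ω => ((κ (Xc n ω)) A).toReal))
    (hmark' : ∀ (n : ℕ) (A : Set X), MeasurableSet A →
      (μ'[fun ω' => Set.indicator A (fun _ => (1 : ℝ)) (Xe (n + 1) ω') | 𝓕' n]
        =ᵐ[μ'] fun ω' => ((κε (Xe n ω')) A).toReal))
    -- equal initial laws
    (hinit : Measure.map (Xc 0) μ = Measure.map (Xe 0) μ')
    -- τ is a stopping time of the canonical filtration on path space, and
    -- g is F_τ-measurable: both depend only on the path up to time τ
    (τ : (ℕ → X) → ℕ) (hτmeas : Measurable τ)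
    (hτstop : ∀ x y : ℕ → X, (∀ k ≤ τ x, x k = y k) → τ y = τ x)
    (g : (ℕ → X) → ℝ) (hgmeas : Measurable g)
    (hg : ∀ x y : ℕ → X, (∀ k ≤ τ x, x k = y k) → g x = g y)
    (hτint : Integrable (fun ω => (τ (fun n => Xc n ω) : ℝ)) μ) :
    tvDist (Measure.map (fun ω => g (fun n => Xc n ω)) μ)
        (Measure.map (fun ω' => g (fun n => Xe n ω')) μ')
      ≤ ε * ∫ ω, (τ (fun n => Xc n ω) : ℝ) ∂μ := by
  classical
  have hXm : ∀ n, Measurable (Xc n) := fun n => ((hadapt n)).mono (𝓕.le n) le_rfl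
  have hXm' : ∀ n, Measurable (Xe n) := fun n => ((hadapt' n)).mono (𝓕'.le n) le_rfl
  have h𝓕m : ∀ n, Measurable[𝓕 n] (Xc n) := fun n => (hadapt n)
  have h𝓕m' : ∀ n, Measurable[𝓕' n] (Xe n) := fun n => (hadapt' n)
  have hpathm : Measurable (fun ω => (fun n => Xc n ω)) := measurable_pi_lambda _ hXm
  have hpathm' : Measurable (fun ω' => (fun n => Xe n ω')) := measurable_pi_lambda _ hXm'
  have hgpm : Measurable (fun ω => g (fun n => Xc n ω)) := hgmeas.comp hpathm
  have hgpm' : Measurable (fun ω' => g (fun n => Xe n ω')) := hgmeas.comp hpathm'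
  set I := ∫ ω, (τ (fun n => Xc n ω) : ℝ) ∂μ with hI
  haveI : Nonempty {s : Set ℝ // MeasurableSet s} := ⟨⟨∅, MeasurableSet.empty⟩⟩
  rw [tvDist]
  refine ciSup_le ?_
  rintro ⟨B, hB⟩
  rw [Measure.map_apply hgpm hB, Measure.map_apply hgpm' hB]
  -- tail sets and their measurability
  have hEmeas : ∀ N : ℕ, MeasurableSet {ω | N < τ (fun n => Xc n ω)} :=
    fun N => (hτmeas.comp hpathm) measurableSet_Ioi
  have hEmeas' : ∀ N : ℕ, MeasurableSet {ω' | N < τ (fun n => Xe n ω')} :=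
    fun N => (hτmeas.comp hpathm') measurableSet_Ioi
  -- the key finite-horizon estimate
  have key : ∀ N : ℕ,
      |(μ ((fun ω => g (fun n => Xc n ω)) ⁻¹' B)).toReal -
        (μ' ((fun ω' => g (fun n => Xe n ω')) ⁻¹' B)).toReal|
      ≤ (μ {ω | N < τ (fun n => Xc n ω)}).toReal + ε * I
        + (μ' {ω' | N < τ (fun n => Xe n ω')}).toReal := by
    intro N
    set T : Set (ℕ → X) := {x | τ x ≤ N ∧ g x ∈ B} with hT
    have hTmeas : MeasurableSet T :=
      MeasurableSet.inter (hτmeas (measurableSet_Iic : MeasurableSet (Set.Iic N))) (hgmeas hB)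
    set f0 : (ℕ → X) → ℝ := Set.indicator T (fun _ => 1) with hf0
    have hf0m : Measurable f0 := measurable_const.indicator hTmeas
    have hf00 : ∀ x, 0 ≤ f0 x := fun x => Set.indicator_nonneg (fun _ _ => zero_le_one) x
    have hf01 : ∀ x, f0 x ≤ 1 := fun x => by
      by_cases hx : x ∈ T <;> simp [hf0, Set.indicator_apply, hx]
    have hTdep : ∀ x z : ℕ → X, (∀ k ≤ τ x, x k = z k) → (z ∈ T ↔ x ∈ T) := by
      intro x z hxz
      have hτz := hτstop x z hxz
      have hgz := hg x z hxz
      simp only [hT, Set.mem_setOf_eq, hτz, ← hgz]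
    have hf0dep : ∀ (j₀ : ℕ) (x : ℕ → X), τ x ≤ j₀ → ∀ z, (∀ k ≤ j₀, z k = x k) →
        f0 z = f0 x := by
      intro j₀ x hτx z hz
      have hxz : ∀ k ≤ τ x, x k = z k := fun k hk => (hz k (hk.trans hτx)).symm
      simp only [hf0, Set.indicator_apply]
      exact if_congr (hTdep x z hxz) rfl rfl
    have hf0depN : ∀ x y : ℕ → X, (∀ k ≤ N, x k = y k) → f0 x = f0 y := by
      intro x y hxy
      by_cases hτx : τ x ≤ N
      · exact (hf0dep N x hτx y (fun k hk => (hxy k hk).symm)).symm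
      · by_cases hτy : τ y ≤ N
        · exact hf0dep N y hτy x (fun k hk => hxy k hk)
        · have hx : x ∉ T := fun hx => hτx hx.1
          have hy : y ∉ T := fun hy => hτy hy.1
          simp [hf0, Set.indicator_of_notMem, hx, hy]
    -- telescoping quantities
    set A : ℕ → ℝ := fun j => ∫ ω, val κε f0 (N - j) j (fun n => Xc n ω) ∂μ with hA
    set A' : ℕ → ℝ := fun j => ∫ ω', val κε f0 (N - j) j (fun n => Xe n ω') ∂μ' with hA'
    -- one-step estimate on the κ-chain
    have hstep : ∀ j, j < N →
        |A (j+1) - A j| ≤ ε * (μ {ω | j < τ (fun n => Xc n ω)}).toReal := by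
      intro j hj
      set Φ : (ℕ → X) → ℝ := val κε f0 (N - (j+1)) (j+1) with hΦ
      have hΦm : Measurable Φ := val_meas κε hf0m _ _
      have hΦ0 : ∀ x, 0 ≤ Φ x := fun x => val_nonneg κε hf00 _ _ x
      have hΦ1 : ∀ x, Φ x ≤ 1 := fun x => val_le_one κε hf0m hf00 hf01 _ _ x
      have hΦdep : ∀ x y : ℕ → X, (∀ k ≤ j + 1, x k = y k) → Φ x = Φ y := by
        intro x y hxy
        exact val_dep κε (N - (j+1)) (j+1)
          (fun a b hab => hf0depN a b fun k hk => hab k (by omega)) x y hxy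
      have hAj1 : A (j+1) = ∫ ω, ∫ y, Φ (Function.update (fun n => Xc n ω) (j+1) y)
          ∂(κ (Xc j ω)) ∂μ :=
        markov_step μ κ Xc hXm 𝓕 h𝓕m hmark j Φ hΦm hΦ0 hΦ1 hΦdep
      have hNj : N - j = (N - (j+1)) + 1 := by omega
      have hAj : A j = ∫ ω, ∫ y, Φ (Function.update (fun n => Xc n ω) (j+1) y)
          ∂(κε (Xc j ω)) ∂μ := by
        simp only [hA, hNj, val]; rfl
      rw [hAj1, hAj]
      set G : Ω → ℝ := fun ω => ∫ y, Φ (Function.update (fun n => Xc n ω) (j+1) y)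
        ∂(κ (Xc j ω)) with hG
      set Gε : Ω → ℝ := fun ω => ∫ y, Φ (Function.update (fun n => Xc n ω) (j+1) y)
        ∂(κε (Xc j ω)) with hGε
      have hGm : Measurable G := (kint_meas κ hΦm j).comp hpathm
      have hGεm : Measurable Gε := (kint_meas κε hΦm j).comp hpathm
      have hGb : ∀ ω, 0 ≤ G ω ∧ G ω ≤ 1 := fun ω =>
        integral_bdd01 _ ((hΦm.comp (measurable_update _)).aestronglyMeasurable)
          (fun y => hΦ0 _) (fun y => hΦ1 _)
      have hGεb : ∀ ω, 0 ≤ Gε ω ∧ Gε ω ≤ 1 := fun ω =>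
        integral_bdd01 _ ((hΦm.comp (measurable_update _)).aestronglyMeasurable)
          (fun y => hΦ0 _) (fun y => hΦ1 _)
      have hGint : Integrable G μ := integrable_of_bdd01 μ hGm.aestronglyMeasurable
        (fun ω => (hGb ω).1) (fun ω => (hGb ω).2)
      have hGεint : Integrable Gε μ := integrable_of_bdd01 μ hGεm.aestronglyMeasurable
        (fun ω => (hGεb ω).1) (fun ω => (hGεb ω).2)
      rw [← integral_sub hGint hGεint]
      have hptwise : ∀ ω, |G ω - Gε ω| ≤
          Set.indicator {ω | j < τ (fun n => Xc n ω)} (fun _ => ε) ω := by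
        intro ω
        by_cases hτj : τ (fun n => Xc n ω) ≤ j
        · have hconst : ∀ y, Φ (Function.update (fun n => Xc n ω) (j+1) y)
              = f0 (fun n => Xc n ω) := by
            intro y
            refine val_const κε (fun n => Xc n ω)
              (fun z hz => hf0dep j (fun n => Xc n ω) hτj z hz) (N - (j+1)) (j+1)
              (by omega) _ (fun k hk => ?_)
            rw [Function.update_apply, if_neg (by omega : k ≠ j + 1)]
          have hGeq : G ω = f0 (fun n => Xc n ω) := by
            rw [hG]; simp only [hconst]; simp
          have hGεeq : Gε ω = f0 (fun n => Xc n ω) := by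
            rw [hGε]; simp only [hconst]; simp
          have hnot : ω ∉ {ω | j < τ (fun n => Xc n ω)} := by
            simp only [Set.mem_setOf_eq, not_lt]; exact hτj
          rw [hGeq, hGεeq, sub_self, abs_zero, Set.indicator_of_notMem hnot]
        · have hmem : ω ∈ {ω | j < τ (fun n => Xc n ω)} := by
            simp only [Set.mem_setOf_eq]; omega
          rw [Set.indicator_of_mem hmem]
          rw [abs_sub_comm]
          refine le_trans (tvDist_integral_le (κε (Xc j ω)) (κ (Xc j ω))
            (hΦm.comp (measurable_update _)) (fun y => hΦ0 _) (fun y => hΦ1 _)) ?_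
          exact happrox (Xc j ω)
      calc |∫ ω, (G ω - Gε ω) ∂μ| ≤ ∫ ω, |G ω - Gε ω| ∂μ := by
            simpa [Real.norm_eq_abs] using
              norm_integral_le_integral_norm (μ := μ) (fun ω => G ω - Gε ω)
        _ ≤ ∫ ω, Set.indicator {ω | j < τ (fun n => Xc n ω)} (fun _ => ε) ω ∂μ := by
            refine integral_mono (hGint.sub hGεint).abs ?_ hptwise
            exact (integrable_const ε).indicator (hEmeas j)
        _ = ε * (μ {ω | j < τ (fun n => Xc n ω)}).toReal := by
            rw [integral_indicator_const ε (hEmeas j), smul_eq_mul, mul_comm, measureReal_def]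
    -- the κε-chain: constant in j
    have hstep' : ∀ j, j < N → A' (j+1) = A' j := by
      intro j hj
      set Φ : (ℕ → X) → ℝ := val κε f0 (N - (j+1)) (j+1) with hΦ
      have hΦm : Measurable Φ := val_meas κε hf0m _ _
      have hΦ0 : ∀ x, 0 ≤ Φ x := fun x => val_nonneg κε hf00 _ _ x
      have hΦ1 : ∀ x, Φ x ≤ 1 := fun x => val_le_one κε hf0m hf00 hf01 _ _ x
      have hΦdep : ∀ x y : ℕ → X, (∀ k ≤ j + 1, x k = y k) → Φ x = Φ y := by
        intro x y hxy
        exact val_dep κε (N - (j+1)) (j+1)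
          (fun a b hab => hf0depN a b fun k hk => hab k (by omega)) x y hxy
      have hAj1 : A' (j+1) = ∫ ω', ∫ y, Φ (Function.update (fun n => Xe n ω') (j+1) y)
          ∂(κε (Xe j ω')) ∂μ' :=
        markov_step μ' κε Xe hXm' 𝓕' h𝓕m' hmark' j Φ hΦm hΦ0 hΦ1 hΦdep
      have hNj : N - j = (N - (j+1)) + 1 := by omega
      have hAj : A' j = ∫ ω', ∫ y, Φ (Function.update (fun n => Xe n ω') (j+1) y)
          ∂(κε (Xe j ω')) ∂μ' := by
        simp only [hA', hNj, val]; rfl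
      rw [hAj1, hAj]
    -- endpoints
    have hAN : A N = (μ ((fun ω => (fun n => Xc n ω)) ⁻¹' T)).toReal := by
      have hval0 : ∀ x : ℕ → X, val κε f0 (N - N) N x = f0 x := by
        intro x; rw [Nat.sub_self]; rfl
      simp only [hA, hval0]
      have hind : (fun ω => f0 (fun n => Xc n ω))
          = Set.indicator ((fun ω => (fun n => Xc n ω)) ⁻¹' T) (fun _ => (1:ℝ)) := by
        funext ω
        simp [hf0, Set.indicator_apply, Set.mem_preimage]
      rw [hind, integral_indicator_const _ (hpathm hTmeas), smul_eq_mul, mul_one, measureReal_def]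
    have hA'N : A' N = (μ' ((fun ω' => (fun n => Xe n ω')) ⁻¹' T)).toReal := by
      have hval0 : ∀ x : ℕ → X, val κε f0 (N - N) N x = f0 x := by
        intro x; rw [Nat.sub_self]; rfl
      simp only [hA', hval0]
      have hind : (fun ω' => f0 (fun n => Xe n ω'))
          = Set.indicator ((fun ω' => (fun n => Xe n ω')) ⁻¹' T) (fun _ => (1:ℝ)) := by
        funext ω'
        simp [hf0, Set.indicator_apply, Set.mem_preimage]
      rw [hind, integral_indicator_const _ (hpathm' hTmeas), smul_eq_mul, mul_one, measureReal_def]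
    -- equal initial laws transfer the j = 0 endpoint
    have hA0 : A 0 = A' 0 := by
      set h0f : X → ℝ := fun c => val κε f0 N 0 (fun _ => c) with hh0
      have hh0m : Measurable h0f :=
        (val_meas κε hf0m N 0).comp (measurable_pi_lambda _ fun _ => measurable_id)
      have hdep : ∀ x y : ℕ → X, (∀ k ≤ 0 + N, x k = y k) → f0 x = f0 y :=
        fun x y hxy => hf0depN x y fun k hk => hxy k (by omega)
      have e1 : A 0 = ∫ ω, h0f (Xc 0 ω) ∂μ := by
        simp only [hA, Nat.sub_zero]
        refine integral_congr_ae (ae_of_all _ fun ω => ?_)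
        refine val_dep κε N 0 hdep _ _ fun k hk => ?_
        have : k = 0 := Nat.le_zero.mp hk
        subst this; rfl
      have e2 : A' 0 = ∫ ω', h0f (Xe 0 ω') ∂μ' := by
        simp only [hA', Nat.sub_zero]
        refine integral_congr_ae (ae_of_all _ fun ω' => ?_)
        refine val_dep κε N 0 hdep _ _ fun k hk => ?_
        have : k = 0 := Nat.le_zero.mp hk
        subst this; rfl
      rw [e1, e2, ← integral_map (hXm 0).aemeasurable hh0m.aestronglyMeasurable, hinit,
        integral_map (hXm' 0).aemeasurable hh0m.aestronglyMeasurable]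
    have hA'chain : A' 0 = A' N := by
      have : ∀ j, j ≤ N → A' 0 = A' j := by
        intro j
        induction j with
        | zero => intro _; rfl
        | succ j ih =>
          intro hj
          rw [ih (by omega), hstep' j (by omega)]
      exact this N le_rfl
    -- telescoping sum bound
    have hsum : |A N - A 0| ≤ ε * I := by
      have htel : A N - A 0 = ∑ j ∈ Finset.range N, (A (j+1) - A j) :=
        (Finset.sum_range_sub A N).symm
      rw [htel]
      have hSig : ∑ j ∈ Finset.range N, (μ {ω | j < τ (fun n => Xc n ω)}).toReal ≤ I := by
        have hm : ∀ j : ℕ, (μ {ω | j < τ (fun n => Xc n ω)}).toReal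
            = ∫ ω, Set.indicator {ω | j < τ (fun n => Xc n ω)} (fun _ => (1:ℝ)) ω ∂μ := by
          intro j
          rw [integral_indicator_const _ (hEmeas j), smul_eq_mul, mul_one, measureReal_def]
        simp only [hm]
        rw [← integral_finset_sum _ (fun j _ => (integrable_const (1:ℝ)).indicator (hEmeas j))]
        refine integral_mono ?_ hτint ?_
        · exact integrable_finset_sum _ (fun j _ => (integrable_const (1:ℝ)).indicator (hEmeas j))
        · intro ω
          have : ∀ j : ℕ, Set.indicator {ω | j < τ (fun n => Xc n ω)} (fun _ => (1:ℝ)) ω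
              = if j < τ (fun n => Xc n ω) then (1:ℝ) else 0 := fun j => by
            simp [Set.indicator_apply]
          simp only [this]
          exact sum_ite_lt_le _ _
      calc |∑ j ∈ Finset.range N, (A (j+1) - A j)|
          ≤ ∑ j ∈ Finset.range N, |A (j+1) - A j| := Finset.abs_sum_le_sum_abs _ _
        _ ≤ ∑ j ∈ Finset.range N, ε * (μ {ω | j < τ (fun n => Xc n ω)}).toReal :=
            Finset.sum_le_sum fun j hj => hstep j (Finset.mem_range.1 hj)
        _ = ε * ∑ j ∈ Finset.range N, (μ {ω | j < τ (fun n => Xc n ω)}).toReal :=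
            (Finset.mul_sum _ _ _).symm
        _ ≤ ε * I := mul_le_mul_of_nonneg_left hSig hε.le
    -- main middle bound
    have hmid : |A N - A' N| ≤ ε * I := by
      have : A' N = A 0 := by rw [← hA'chain, ← hA0]
      rw [this]
      exact hsum
    -- compare truncated and untruncated events
    have hbound1 : |(μ ((fun ω => g (fun n => Xc n ω)) ⁻¹' B)).toReal - A N|
        ≤ (μ {ω | N < τ (fun n => Xc n ω)}).toReal := by
      rw [hAN]
      have hsubset : ((fun ω => (fun n => Xc n ω)) ⁻¹' T)
          ⊆ ((fun ω => g (fun n => Xc n ω)) ⁻¹' B) := fun ω hω => hω.2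
      have hb_le_a : (μ ((fun ω => (fun n => Xc n ω)) ⁻¹' T)).toReal
          ≤ (μ ((fun ω => g (fun n => Xc n ω)) ⁻¹' B)).toReal :=
        ENNReal.toReal_mono (measure_ne_top _ _) (measure_mono hsubset)
      have hcover : ((fun ω => g (fun n => Xc n ω)) ⁻¹' B)
          ⊆ ((fun ω => (fun n => Xc n ω)) ⁻¹' T) ∪ {ω | N < τ (fun n => Xc n ω)} := by
        intro ω hω
        by_cases hτω : τ (fun n => Xc n ω) ≤ N
        · exact Or.inl ⟨hτω, hω⟩
        · exact Or.inr (by simpa [Set.mem_setOf_eq] using Nat.lt_of_not_le hτω)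
      have ha_le : (μ ((fun ω => g (fun n => Xc n ω)) ⁻¹' B)).toReal
          ≤ (μ ((fun ω => (fun n => Xc n ω)) ⁻¹' T)).toReal
            + (μ {ω | N < τ (fun n => Xc n ω)}).toReal := by
        have h1 : μ ((fun ω => g (fun n => Xc n ω)) ⁻¹' B)
            ≤ μ ((fun ω => (fun n => Xc n ω)) ⁻¹' T) + μ {ω | N < τ (fun n => Xc n ω)} :=
          le_trans (measure_mono hcover) (measure_union_le _ _)
        have h2 := ENNReal.toReal_mono
          (by exact ENNReal.add_ne_top.2 ⟨measure_ne_top _ _, measure_ne_top _ _⟩) h1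
        rwa [ENNReal.toReal_add (measure_ne_top _ _) (measure_ne_top _ _)] at h2
      rw [abs_sub_comm, abs_of_nonpos (by linarith), neg_sub]
      linarith
    have hbound1' : |A' N - (μ' ((fun ω' => g (fun n => Xe n ω')) ⁻¹' B)).toReal|
        ≤ (μ' {ω' | N < τ (fun n => Xe n ω')}).toReal := by
      rw [hA'N]
      have hsubset : ((fun ω' => (fun n => Xe n ω')) ⁻¹' T)
          ⊆ ((fun ω' => g (fun n => Xe n ω')) ⁻¹' B) := fun ω' hω' => hω'.2
      have hb_le_a : (μ' ((fun ω' => (fun n => Xe n ω')) ⁻¹' T)).toReal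
          ≤ (μ' ((fun ω' => g (fun n => Xe n ω')) ⁻¹' B)).toReal :=
        ENNReal.toReal_mono (measure_ne_top _ _) (measure_mono hsubset)
      have hcover : ((fun ω' => g (fun n => Xe n ω')) ⁻¹' B)
          ⊆ ((fun ω' => (fun n => Xe n ω')) ⁻¹' T) ∪ {ω' | N < τ (fun n => Xe n ω')} := by
        intro ω' hω'
        by_cases hτω : τ (fun n => Xe n ω') ≤ N
        · exact Or.inl ⟨hτω, hω'⟩
        · exact Or.inr (by simpa [Set.mem_setOf_eq] using Nat.lt_of_not_le hτω)
      have ha_le : (μ' ((fun ω' => g (fun n => Xe n ω')) ⁻¹' B)).toReal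
          ≤ (μ' ((fun ω' => (fun n => Xe n ω')) ⁻¹' T)).toReal
            + (μ' {ω' | N < τ (fun n => Xe n ω')}).toReal := by
        have h1 : μ' ((fun ω' => g (fun n => Xe n ω')) ⁻¹' B)
            ≤ μ' ((fun ω' => (fun n => Xe n ω')) ⁻¹' T) + μ' {ω' | N < τ (fun n => Xe n ω')} :=
          le_trans (measure_mono hcover) (measure_union_le _ _)
        have h2 := ENNReal.toReal_mono
          (by exact ENNReal.add_ne_top.2 ⟨measure_ne_top _ _, measure_ne_top _ _⟩) h1
        rwa [ENNReal.toReal_add (measure_ne_top _ _) (measure_ne_top _ _)] at h2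
      rw [abs_of_nonpos (by linarith), neg_sub]
      linarith
    calc |(μ ((fun ω => g (fun n => Xc n ω)) ⁻¹' B)).toReal -
        (μ' ((fun ω' => g (fun n => Xe n ω')) ⁻¹' B)).toReal|
        ≤ |(μ ((fun ω => g (fun n => Xc n ω)) ⁻¹' B)).toReal - A N|
          + |A N - (μ' ((fun ω' => g (fun n => Xe n ω')) ⁻¹' B)).toReal| := abs_sub_le _ _ _
      _ ≤ |(μ ((fun ω => g (fun n => Xc n ω)) ⁻¹' B)).toReal - A N|
          + (|A N - A' N| + |A' N - (μ' ((fun ω' => g (fun n => Xe n ω')) ⁻¹' B)).toReal|) := by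
          have := abs_sub_le (A N) (A' N)
            ((μ' ((fun ω' => g (fun n => Xe n ω')) ⁻¹' B)).toReal)
          linarith
      _ ≤ (μ {ω | N < τ (fun n => Xc n ω)}).toReal + ε * I
          + (μ' {ω' | N < τ (fun n => Xe n ω')}).toReal := by
          linarith [hbound1, hmid, hbound1']
  -- take the limit N → ∞
  have htail : Tendsto (fun N : ℕ => (μ {ω | N < τ (fun n => Xc n ω)}).toReal) atTop (𝓝 0) := by
    have hanti : Antitone (fun N : ℕ => {ω | N < τ (fun n => Xc n ω)}) :=
      fun a b hab ω h => lt_of_le_of_lt hab h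
    have hinter : ⋂ N : ℕ, {ω | N < τ (fun n => Xc n ω)} = ∅ := by
      ext ω
      simp only [Set.mem_iInter, Set.mem_setOf_eq, Set.mem_empty_iff_false, iff_false, not_forall]
      exact ⟨τ (fun n => Xc n ω), lt_irrefl _⟩
    have ht := tendsto_measure_iInter_atTop (μ := μ)
      (fun N => (hEmeas N).nullMeasurableSet) hanti ⟨0, measure_ne_top _ _⟩
    rw [hinter, measure_empty] at ht
    have := (ENNReal.tendsto_toReal (by simp : (0:ℝ≥0∞) ≠ ⊤)).comp ht
    exact this
  have htail' : Tendsto (fun N : ℕ => (μ' {ω' | N < τ (fun n => Xe n ω')}).toReal)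
      atTop (𝓝 0) := by
    have hanti : Antitone (fun N : ℕ => {ω' | N < τ (fun n => Xe n ω')}) :=
      fun a b hab ω' h => lt_of_le_of_lt hab h
    have hinter : ⋂ N : ℕ, {ω' | N < τ (fun n => Xe n ω')} = ∅ := by
      ext ω'
      simp only [Set.mem_iInter, Set.mem_setOf_eq, Set.mem_empty_iff_false, iff_false, not_forall]
      exact ⟨τ (fun n => Xe n ω'), lt_irrefl _⟩
    have ht := tendsto_measure_iInter_atTop (μ := μ')
      (fun N => (hEmeas' N).nullMeasurableSet) hanti ⟨0, measure_ne_top _ _⟩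
    rw [hinter, measure_empty] at ht
    have := (ENNReal.tendsto_toReal (by simp : (0:ℝ≥0∞) ≠ ⊤)).comp ht
    exact this
  have hlim : Tendsto (fun N : ℕ => (μ {ω | N < τ (fun n => Xc n ω)}).toReal + ε * I
      + (μ' {ω' | N < τ (fun n => Xe n ω')}).toReal) atTop (𝓝 (0 + ε * I + 0)) :=
    (htail.add tendsto_const_nhds).add htail'
  rw [zero_add, add_zero] at hlim
  exact ge_of_tendsto' hlim key
end

section
/- For the two-state example with P = [[1−β, β],[β, 1−β]], P_ε = [[1−β+ε, β−ε],[β+ε, 1−β−ε]], μ = (1/2, 1/2), and ν_γ = (γ, 1−γ) with γ > 1/2, one has ‖μ − (1/n)Σ_{k=0}^{n−1} ν_γ P_ε^k‖_TV = ε/(α+ε) + (‖μ − ν_γ‖_TV − ε/(α+ε))·(1−(1−α−ε)^n)/((α+ε)n), where α + ε = 2β; i.e., the general ergodic-average total-variation bound is attained with equality. -/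
theorem two_state_sharpness (β ε γ : ℝ) (hε : 0 < ε) (hεβ : ε < 2 * β) (hβ : β ≤ 1 / 2)
    (hγ : 1 / 2 < γ) (hγ1 : γ ≤ 1) (n : ℕ) (hn : 0 < n) :
    let α : ℝ := 2 * β - ε
    let Pε : Matrix (Fin 2) (Fin 2) ℝ := !![1 - β + ε, β - ε; β + ε, 1 - β - ε]
    let μv : Fin 2 → ℝ := ![1 / 2, 1 / 2]
    let ν : Fin 2 → ℝ := ![γ, 1 - γ]
    (1 / 2) * ∑ i : Fin 2,
        |μv i - (1 / (n : ℝ)) * ∑ k ∈ Finset.range n, Matrix.vecMul ν (Pε ^ k) i|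
      = ε / (α + ε)
        + ((γ - 1 / 2) - ε / (α + ε)) * (1 - (1 - α - ε) ^ n) / ((α + ε) * (n : ℝ)) := by
  intro α Pε μv ν
  have hb : (0:ℝ) < 2 * β := hε.trans hεβ
  have hbne : (2 * β : ℝ) ≠ 0 := ne_of_gt hb
  have hβne : β ≠ 0 := (by linarith : (0:ℝ) < β).ne'
  have hnpos : (0:ℝ) < n := by exact_mod_cast hn
  have hnne : (n:ℝ) ≠ 0 := ne_of_gt hnpos
  set p : ℝ := (β + ε) / (2 * β) with hp
  set c : ℝ := γ - p with hc
  set l : ℝ := 1 - 2 * β with hl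
  have hl0 : 0 ≤ l := by rw [hl]; linarith
  have hl1 : l < 1 := by rw [hl]; linarith
  have hPε : Pε = !![1 - β + ε, β - ε; β + ε, 1 - β - ε] := rfl
  have hν : ν = ![γ, 1 - γ] := rfl
  have key : ∀ k : ℕ, Matrix.vecMul ν (Pε ^ k) = ![p + c * l ^ k, 1 - (p + c * l ^ k)] := by
    intro k
    induction k with
    | zero =>
      funext i
      fin_cases i <;> simp [hν, hc]
    | succ k ih =>
      rw [pow_succ, ← Matrix.vecMul_vecMul, ih]
      funext i
      fin_cases i
      · show Matrix.vecMul ![p + c * l ^ k, 1 - (p + c * l ^ k)] Pε 0 = p + c * l ^ (k + 1)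
        simp [hPε, Matrix.vecMul, dotProduct, Fin.sum_univ_two]
        rw [hc, hp, hl]
        field_simp
        ring
      · show Matrix.vecMul ![p + c * l ^ k, 1 - (p + c * l ^ k)] Pε 1
            = 1 - (p + c * l ^ (k + 1))
        simp [hPε, Matrix.vecMul, dotProduct, Fin.sum_univ_two]
        rw [hc, hp, hl]
        field_simp
        ring
  set G : ℝ := ∑ k ∈ Finset.range n, l ^ k with hG
  have hG0 : 0 ≤ G := Finset.sum_nonneg fun k _ => pow_nonneg hl0 k
  have hGn : G ≤ n := by
    calc G ≤ ∑ k ∈ Finset.range n, (1:ℝ) :=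
          Finset.sum_le_sum fun k _ => pow_le_one₀ hl0 (le_of_lt hl1)
      _ = n := by simp
  have hgeom : G * (1 - l) = 1 - l ^ n := by
    have h := geom_sum_mul l n
    rw [← hG] at h
    linear_combination -h
  have hsum0 : ∑ k ∈ Finset.range n, Matrix.vecMul ν (Pε ^ k) 0 = n * p + c * G := by
    simp only [key, Matrix.cons_val_zero]
    rw [Finset.sum_add_distrib, ← Finset.mul_sum, ← hG]
    simp [Finset.sum_const, mul_comm]
  have hsum1 : ∑ k ∈ Finset.range n, Matrix.vecMul ν (Pε ^ k) 1
      = n - (n * p + c * G) := by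
    simp only [key, Matrix.cons_val_one, Matrix.head_cons, Matrix.cons_val_zero]
    rw [Finset.sum_sub_distrib, Finset.sum_add_distrib, ← Finset.mul_sum, ← hG]
    simp [Finset.sum_const, mul_comm]
  set D : ℝ := ε / (2 * β) * (1 - G / n) + (γ - 1 / 2) * (G / n) with hD
  have hD0 : 0 ≤ D := by
    apply add_nonneg
    · apply mul_nonneg (by positivity)
      have : G / n ≤ 1 := (div_le_one hnpos).mpr hGn
      linarith
    · apply mul_nonneg (by linarith) (by positivity)
  have e1 : (1:ℝ) / 2 - 1 / n * (n * p + c * G) = -D := by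
    rw [hD, hc, hp]
    field_simp
    ring
  have e2 : (1:ℝ) / 2 - 1 / n * (n - (n * p + c * G)) = D := by
    rw [hD, hc, hp]
    field_simp
    ring
  simp only [Fin.sum_univ_two, hsum0, hsum1]
  have hμ0 : μv 0 = 1 / 2 := rfl
  have hμ1 : μv 1 = 1 / 2 := rfl
  rw [hμ0, hμ1, e1, e2, abs_neg, abs_of_nonneg hD0]
  have hαε : α + ε = 2 * β := by simp [α]
  have hlα : 1 - α - ε = l := by rw [hl]; simp [α]; ring
  rw [hαε, hlα, ← hgeom]
  rw [hD]
  field_simp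
  ring
end
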